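/- arXiv:1602.07829 — 2 statements merged into one kernel-verified Lean document; each statement's English description precedes it below -/
import Mathlib

section
/- Let p be a prime, let H_1, …, H_r be finite groups, let D = H_1 × ⋯ × H_r, let N be a subgroup of the center of D, and let G be a subgroup of the central product D/N such that for each i the full preimage Γ of G in D projects onto H_i. Then c_p(G) ≤ c_p(H_1) + ⋯ + c_p(H_r). -/
/-- A composition series of a group `G`: an ascending chain of subgroups from `⊥` to `⊤`
in which each term is normal in the next, with simple quotients. -/
structure GroupCompSeries (G : Type*) [Group G] where
  len : ℕ
  ser : Fin (len + 1) → Subgroup G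
  ser_bot : ser 0 = ⊥
  ser_top : ser (Fin.last len) = ⊤
  ser_le : ∀ i : Fin len, ser i.castSucc ≤ ser i.succ
  ser_normal : ∀ i : Fin len, ((ser i.castSucc).subgroupOf (ser i.succ)).Normal
  ser_simple : ∀ i : Fin len,
    haveI := ser_normal i
    IsSimpleGroup (↥(ser i.succ) ⧸ (ser i.castSucc).subgroupOf (ser i.succ))

/-- The number of factors of order `p` in a composition series. -/
noncomputable def GroupCompSeries.count {G : Type*} [Group G]
    (S : GroupCompSeries G) (p : ℕ) : ℕ := by
  classical
  exact (Finset.univ.filter fun i : Fin S.len =>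
    Nat.card (↥(S.ser i.succ) ⧸ (S.ser i.castSucc).subgroupOf (S.ser i.succ)) = p).card

/-- `cp p G` is the number of composition factors of `G` of order `p`, counted with
multiplicity in a composition series (well defined by Jordan–Hölder). -/
noncomputable def cp (p : ℕ) (G : Type*) [Group G] : ℕ := by
  classical
  exact if h : Nonempty (GroupCompSeries G) then h.some.count p else 0

/-- The constant `ε_q` of Theorem 1, for `q = p ^ f`. -/
noncomputable def epsq (p f : ℕ) : ℚ := by
  classical
  exact if p = 2 ∧ Even f then 4 / 3
    else if ∃ n : ℕ, p = 2 ^ 2 ^ n + 1 then p / (p - 1)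
    else 1

/-- A subgroup of `GL(d, F)` acts irreducibly on its natural module. -/
def natIrreducible {F : Type*} [Field F] {d : ℕ}
    (G : Subgroup (Matrix.GeneralLinearGroup (Fin d) F)) : Prop :=
  (⊥ : Submodule F (Fin d → F)) ≠ ⊤ ∧
  ∀ W : Submodule F (Fin d → F),
    (∀ g ∈ G, ∀ v ∈ W, Matrix.mulVec (g : Matrix (Fin d) (Fin d) F) v ∈ W) →
      W = ⊥ ∨ W = ⊤

section Transfer

variable {G : Type*} {G' : Type*} [Group G] [Group G']

/-- Generic quotient-factor transfer: kernel computation equiv. -/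
noncomputable def kerEquiv {X Y : Type*} [Group X] [Group Y] (φ : X →* Y) (N : Subgroup X)
    [N.Normal] (h : φ.ker = N) (hs : Function.Surjective φ) : (X ⧸ N) ≃* Y :=
  (QuotientGroup.quotientMulEquivOfEq h.symm).trans (QuotientGroup.quotientKerEquivOfSurjective φ hs)

theorem transfer_normal (f : G →* G') {A B : Subgroup G} {A' B' : Subgroup G'}
    (hB' : B.map f = B')
    (hmem : ∀ b ∈ B, (f b ∈ A' ↔ b ∈ A))
    (h : (A.subgroupOf B).Normal) : (A'.subgroupOf B').Normal := by
  constructor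
  rintro ⟨n, hnB'⟩ hn ⟨g, hgB'⟩
  rw [Subgroup.mem_subgroupOf] at hn ⊢
  have hnB : n ∈ B.map f := hB'.symm ▸ hnB'
  have hgB : g ∈ B.map f := hB'.symm ▸ hgB'
  obtain ⟨b, hb, rfl⟩ := hnB
  obtain ⟨c, hc, rfl⟩ := hgB
  have hbA : b ∈ A := (hmem b hb).1 hn
  have hconj : c * b * c⁻¹ ∈ A := by
    have := h.conj_mem ⟨b, hb⟩ (by rwa [Subgroup.mem_subgroupOf]) ⟨c, hc⟩
    rwa [Subgroup.mem_subgroupOf] at this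
  show f c * f b * (f c)⁻¹ ∈ A'
  rw [← map_inv, ← map_mul, ← map_mul]
  exact (hmem _ (mul_mem (mul_mem hc hb) (inv_mem hc))).2 hconj

theorem transfer_normal_rev (f : G →* G') {A B : Subgroup G} {A' B' : Subgroup G'}
    (hB' : B.map f = B')
    (hmem : ∀ b ∈ B, (f b ∈ A' ↔ b ∈ A))
    (h : (A'.subgroupOf B').Normal) : (A.subgroupOf B).Normal := by
  constructor
  rintro ⟨n, hnB⟩ hn ⟨g, hgB⟩
  rw [Subgroup.mem_subgroupOf] at hn ⊢
  have hfB : ∀ x ∈ B, f x ∈ B' := fun x hx => hB' ▸ Subgroup.mem_map_of_mem f hx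
  have hfn : f n ∈ A' := (hmem n hnB).2 hn
  have hconj : f g * f n * (f g)⁻¹ ∈ A' := by
    have := h.conj_mem ⟨f n, hfB n hnB⟩ (by rwa [Subgroup.mem_subgroupOf]) ⟨f g, hfB g hgB⟩
    rwa [Subgroup.mem_subgroupOf] at this
  show g * n * g⁻¹ ∈ A
  refine (hmem _ (mul_mem (mul_mem hgB hnB) (inv_mem hgB))).1 ?_
  rwa [map_mul, map_mul, map_inv]

noncomputable def transferEquiv (f : G →* G') {A B : Subgroup G} {A' B' : Subgroup G'}
    (hB' : B.map f = B')
    (hmem : ∀ b ∈ B, (f b ∈ A' ↔ b ∈ A))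
    (hN : (A.subgroupOf B).Normal) (hN' : (A'.subgroupOf B').Normal) :
    (↥B ⧸ A.subgroupOf B) ≃* (↥B' ⧸ A'.subgroupOf B') := by
  haveI := hN; haveI := hN'
  have hcod : ∀ b : ↥B, f b ∈ B' := fun b => hB' ▸ Subgroup.mem_map_of_mem f b.2
  let φ : ↥B →* ↥B' ⧸ A'.subgroupOf B' :=
    (QuotientGroup.mk' _).comp (MonoidHom.codRestrict (f.comp B.subtype) B' hcod)
  have hker : φ.ker = A.subgroupOf B := by
    ext x
    simp only [φ, MonoidHom.mem_ker, MonoidHom.comp_apply, QuotientGroup.mk'_apply,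
      QuotientGroup.eq_one_iff, Subgroup.mem_subgroupOf, MonoidHom.codRestrict_apply,
      MonoidHom.coe_comp, Function.comp_apply, Subgroup.coe_subtype]
    exact hmem x x.2
  have hsurj : Function.Surjective φ := by
    intro q
    induction q using QuotientGroup.induction_on with
    | H x =>
      have hx : (x : G') ∈ B.map f := hB' ▸ x.2
      obtain ⟨b, hb, hfb⟩ := hx
      exact ⟨⟨b, hb⟩, congrArg QuotientGroup.mk (Subtype.ext hfb)⟩
  exact kerEquiv φ _ hker hsurj

theorem transfer_card (f : G →* G') {A B : Subgroup G} {A' B' : Subgroup G'}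
    (hB' : B.map f = B')
    (hmem : ∀ b ∈ B, (f b ∈ A' ↔ b ∈ A))
    (hN : (A.subgroupOf B).Normal) (hN' : (A'.subgroupOf B').Normal) :
    Nat.card (↥B ⧸ A.subgroupOf B) = Nat.card (↥B' ⧸ A'.subgroupOf B') :=
  Nat.card_congr (transferEquiv f hB' hmem hN hN').toEquiv

theorem simple_of_mulEquiv {α β : Type*} [Group α] [Group β] (e : α ≃* β)
    (h : IsSimpleGroup α) : IsSimpleGroup β := by
  haveI := h
  haveI : Nontrivial β := e.symm.toEquiv.nontrivial
  exact IsSimpleGroup.isSimpleGroup_of_surjective e.toMonoidHom e.surjective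

theorem transfer_simple (f : G →* G') {A B : Subgroup G} {A' B' : Subgroup G'}
    (hB' : B.map f = B')
    (hmem : ∀ b ∈ B, (f b ∈ A' ↔ b ∈ A))
    (hN : (A.subgroupOf B).Normal) (hN' : (A'.subgroupOf B').Normal)
    (hs : IsSimpleGroup (↥B ⧸ A.subgroupOf B)) :
    IsSimpleGroup (↥B' ⧸ A'.subgroupOf B') :=
  simple_of_mulEquiv (transferEquiv f hB' hmem hN hN') hs

end Transfer



open Pointwise
section SecondIso

variable {M : Type*} [Group M]

theorem SI_normal {A B : Subgroup M} (hB : (B.subgroupOf (A ⊔ B)).Normal) :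
    ((A ⊓ B).subgroupOf A).Normal := by
  constructor
  rintro ⟨n, hnA⟩ hn ⟨g, hgA⟩
  rw [Subgroup.mem_subgroupOf] at hn ⊢
  rw [Subgroup.mem_inf] at hn
  show g * n * g⁻¹ ∈ A ⊓ B
  rw [Subgroup.mem_inf]
  refine ⟨mul_mem (mul_mem hgA hn.1) (inv_mem hgA), ?_⟩
  have := hB.conj_mem ⟨n, le_sup_right (a := A) hn.2⟩ (by rw [Subgroup.mem_subgroupOf]; exact hn.2)
    ⟨g, le_sup_left (b := B) hgA⟩
  rwa [Subgroup.mem_subgroupOf] at this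

theorem SI_sup_top {A B : Subgroup M} :
    A.subgroupOf (A ⊔ B) ⊔ B.subgroupOf (A ⊔ B) = ⊤ := by
  apply Subgroup.map_injective (A ⊔ B).subtype_injective
  rw [Subgroup.map_sup, Subgroup.subgroupOf_map_subtype, Subgroup.subgroupOf_map_subtype]
  rw [inf_of_le_left (le_sup_left : A ≤ A ⊔ B), inf_of_le_left (le_sup_right : B ≤ A ⊔ B)]
  rw [← MonoidHom.range_eq_map, Subgroup.range_subtype]

noncomputable def SI_equiv {A B : Subgroup M} (hB : (B.subgroupOf (A ⊔ B)).Normal)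
    (hN : ((A ⊓ B).subgroupOf A).Normal) :
    (↥A ⧸ (A ⊓ B).subgroupOf A) ≃* (↥(A ⊔ B) ⧸ B.subgroupOf (A ⊔ B)) := by
  haveI := hB; haveI := hN
  let φ : ↥A →* ↥(A ⊔ B) ⧸ B.subgroupOf (A ⊔ B) :=
    (QuotientGroup.mk' _).comp (Subgroup.inclusion le_sup_left)
  have hker : φ.ker = (A ⊓ B).subgroupOf A := by
    ext x
    simp only [φ, MonoidHom.mem_ker, MonoidHom.comp_apply, QuotientGroup.mk'_apply,
      QuotientGroup.eq_one_iff, Subgroup.mem_subgroupOf, Subgroup.mem_inf]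
    exact ⟨fun h => ⟨x.2, h⟩, fun h => h.2⟩
  have hsurj : Function.Surjective φ := by
    intro q
    induction q using QuotientGroup.induction_on with
    | H x =>
      have hx : x ∈ (⊤ : Subgroup ↥(A ⊔ B)) := Subgroup.mem_top x
      rw [← SI_sup_top (A := A) (B := B)] at hx
      have hset : (x : ↥(A ⊔ B)) ∈ ((A.subgroupOf (A ⊔ B) : Subgroup ↥(A ⊔ B)) : Set ↥(A ⊔ B))
          * (B.subgroupOf (A ⊔ B) : Set ↥(A ⊔ B)) := by
        rw [← Subgroup.mul_normal]
        exact_mod_cast hx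
      obtain ⟨a, ha, b, hb, rfl⟩ := hset
      refine ⟨⟨(a : M), ha⟩, ?_⟩
      show QuotientGroup.mk (Subgroup.inclusion le_sup_left _) = _
      have h1 : Subgroup.inclusion (le_sup_left : A ≤ A ⊔ B) ⟨(a : M), ha⟩ = a := by
        apply Subtype.ext; rfl
      rw [h1]
      have hbmk : (QuotientGroup.mk b : ↥(A ⊔ B) ⧸ B.subgroupOf (A ⊔ B)) = 1 :=
        (QuotientGroup.eq_one_iff b).2 hb
      calc (QuotientGroup.mk a : ↥(A ⊔ B) ⧸ B.subgroupOf (A ⊔ B))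
          = QuotientGroup.mk a * QuotientGroup.mk b := by rw [hbmk, mul_one]
        _ = QuotientGroup.mk (a * b) := rfl
  exact kerEquiv φ _ hker hsurj

end SecondIso

section JHL

variable {M : Type*} [Group M]

/-- `A` is a maximal normal subgroup of `B`. -/
def GIsMax (A B : Subgroup M) : Prop :=
  ∃ (_ : A ≤ B) (h : (A.subgroupOf B).Normal),
    haveI := h
    IsSimpleGroup (↥B ⧸ A.subgroupOf B)

theorem GIsMax.lt {A B : Subgroup M} (h : GIsMax A B) : A < B := by
  obtain ⟨hle, hn, hs⟩ := h
  refine lt_of_le_of_ne hle (fun hEq => ?_)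
  subst hEq
  haveI := hn
  have hsub : Subsingleton (↥A ⧸ A.subgroupOf A) := by
    rw [Subgroup.subgroupOf_self]
    exact QuotientGroup.subsingleton_quotient_top
  exact (not_nontrivial_iff_subsingleton.mpr hsub) hs.toNontrivial

theorem GIsMax.le_or_sup {A B C : Subgroup M} (hA : GIsMax A C) (hB : GIsMax B C) :
    B ≤ A ∨ A ⊔ B = C := by
  obtain ⟨hAC, hnA, hsA⟩ := hA
  obtain ⟨hBC, hnB, _⟩ := hB
  haveI := hnA; haveI := hsA
  set J : Subgroup (↥C ⧸ A.subgroupOf C) :=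
    (B.subgroupOf C).map (QuotientGroup.mk' (A.subgroupOf C)) with hJ
  have hJnorm : J.Normal := hnB.map _ (QuotientGroup.mk'_surjective _)
  rcases hJnorm.eq_bot_or_eq_top with hbot | htop
  · left
    rw [hJ, Subgroup.map_eq_bot_iff, QuotientGroup.ker_mk'] at hbot
    intro b hb
    have := hbot (Subgroup.mem_subgroupOf.mpr (show ((⟨b, hBC hb⟩ : ↥C) : M) ∈ B from hb))
    rwa [Subgroup.mem_subgroupOf] at this
  · right
    refine le_antisymm (sup_le hAC hBC) (fun c hc => ?_)
    have : QuotientGroup.mk (⟨c, hc⟩ : ↥C) ∈ J := by rw [htop]; trivial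
    obtain ⟨b, hb, hmk⟩ := this
    rw [QuotientGroup.mk'_apply, QuotientGroup.eq] at hmk
    have hb' : (b : M) ∈ B := hb
    have hmk' : (b : M)⁻¹ * c ∈ A := hmk
    have hcc : c = (b : M) * ((b : M)⁻¹ * c) := by group
    rw [hcc]
    exact mul_mem (le_sup_right (a := A) hb') (le_sup_left (b := B) hmk')

theorem GIsMax.sup_eq {A B C : Subgroup M} (hA : GIsMax A C) (hB : GIsMax B C)
    (hne : A ≠ B) : A ⊔ B = C := by
  rcases hA.le_or_sup hB with h1 | h1
  · rcases hB.le_or_sup hA with h2 | h2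
    · exact absurd (le_antisymm h2 h1) hne
    · rw [sup_comm]; exact h2
  · exact h1

theorem GIsMax.normal_of {A B : Subgroup M} (h : GIsMax A B) : (A.subgroupOf B).Normal :=
  h.2.1

theorem GIsMax.inf_left {x y : Subgroup M} (hx : GIsMax x (x ⊔ y)) (hy : GIsMax y (x ⊔ y)) :
    GIsMax (x ⊓ y) x := by
  obtain ⟨hyle, hny, hsy⟩ := hy
  haveI := hny
  have hn : ((x ⊓ y).subgroupOf x).Normal := SI_normal hny
  refine ⟨inf_le_left, hn, ?_⟩
  haveI := hn
  exact simple_of_mulEquiv (SI_equiv hny hn).symm hsy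

/-- Jordan-Hölder lattice structure on subgroups, with `Iso` being equality of
cardinalities of the factors (enough for counting). -/
def subgroupJHL (M : Type*) [Group M] : JordanHolderLattice (Subgroup M) where
  IsMaximal := GIsMax
  lt_of_isMaximal := GIsMax.lt
  sup_eq_of_isMaximal := GIsMax.sup_eq
  isMaximal_inf_left_of_isMaximal_sup := GIsMax.inf_left

attribute [local instance] subgroupJHL in
theorem iso_card {M : Type*} [Group M] {a b : Subgroup M × Subgroup M}
    (hab : JordanHolderLattice.Iso a b) :
    Nat.card (↥a.2 ⧸ a.1.subgroupOf a.2) = Nat.card (↥b.2 ⧸ b.1.subgroupOf b.2) :=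
  JordanHolderLattice.Iso.rel
    (fun (p q : Subgroup M × Subgroup M) => Nat.card (↥p.2 ⧸ p.1.subgroupOf p.2) = Nat.card (↥q.2 ⧸ q.1.subgroupOf q.2))
    rfl Eq.symm Eq.trans (fun {x y} h => by
    have h : GIsMax x (x ⊔ y) := h
    show Nat.card (↥(x ⊔ y) ⧸ x.subgroupOf (x ⊔ y)) = Nat.card (↥y ⧸ (x ⊓ y).subgroupOf y)
    have hnx : (x.subgroupOf (y ⊔ x)).Normal := by rw [sup_comm]; exact h.normal_of
    have hn : ((y ⊓ x).subgroupOf y).Normal := SI_normal hnx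
    have e := SI_equiv hnx hn
    rw [sup_comm x y, inf_comm x y]
    exact (Nat.card_congr e.toEquiv).symm) hab

end JHL

section Invariance

attribute [local instance] subgroupJHL

variable {M : Type*} [Group M]

/-- Convert a `GroupCompSeries` to a Mathlib `CompositionSeries` in the JH lattice of
subgroups. -/
def GroupCompSeries.toCS (S : GroupCompSeries M) : CompositionSeries (Subgroup M) where
  length := S.len
  toFun := S.ser
  step i := ⟨S.ser_le i, S.ser_normal i, S.ser_simple i⟩

theorem GroupCompSeries.count_eq_count (S T : GroupCompSeries M) (p : ℕ) :
    S.count p = T.count p := by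
  classical
  have hhead : S.toCS.head = T.toCS.head := by
    show S.ser 0 = T.ser 0
    rw [S.ser_bot, T.ser_bot]
  have hlast : S.toCS.last = T.toCS.last := by
    show S.ser (Fin.last S.len) = T.ser (Fin.last T.len)
    rw [S.ser_top, T.ser_top]
  obtain ⟨e, he⟩ := CompositionSeries.jordan_holder S.toCS T.toCS hhead hlast
  unfold GroupCompSeries.count
  apply Finset.card_bij' (fun i _ => e i) (fun j _ => e.symm j)
  · intro i hi
    simp only [Finset.mem_filter, Finset.mem_univ, true_and] at hi ⊢
    have := he i
    exact Finset.mem_filter.mpr ⟨Finset.mem_univ _, (iso_card this).symm.trans (Finset.mem_filter.mp hi).2⟩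
  · intro j hj
    simp only [Finset.mem_filter, Finset.mem_univ, true_and] at hj ⊢
    have := he (e.symm j)
    rw [Equiv.apply_symm_apply] at this
    exact Finset.mem_filter.mpr ⟨Finset.mem_univ _, (iso_card this).trans (Finset.mem_filter.mp hj).2⟩
  · intro i _; exact e.symm_apply_apply i
  · intro j _; exact e.apply_symm_apply j

theorem cp_eq_count (S : GroupCompSeries M) (p : ℕ) : cp p M = S.count p := by
  unfold cp
  rw [dif_pos ⟨S⟩]
  exact GroupCompSeries.count_eq_count _ S p

end Invariance

section CongrHelpers

variable {M : Type*} [Group M]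

theorem normal_factor_congr {A B A' B' : Subgroup M} (hA : A = A') (hB : B = B')
    (hn : (A.subgroupOf B).Normal) : (A'.subgroupOf B').Normal := by
  subst hA; subst hB; exact hn

theorem simple_factor_congr {A B A' B' : Subgroup M} (hA : A = A') (hB : B = B')
    (hn : (A.subgroupOf B).Normal)
    (hs : haveI := hn; IsSimpleGroup (↥B ⧸ A.subgroupOf B))
    (hn' : (A'.subgroupOf B').Normal) :
    haveI := hn'; IsSimpleGroup (↥B' ⧸ A'.subgroupOf B') := by
  subst hA; subst hB; exact hs

theorem card_factor_congr {A B A' B' : Subgroup M} (hA : A = A') (hB : B = B') :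
    Nat.card (↥B ⧸ A.subgroupOf B) = Nat.card (↥B' ⧸ A'.subgroupOf B') := by
  subst hA; subst hB; rfl

theorem mem_map_iff_of_inj {G G' : Type*} [Group G] [Group G'] {f : G →* G'}
    (hf : Function.Injective f) (A : Subgroup G) (b : G) : f b ∈ A.map f ↔ b ∈ A := by
  constructor
  · rintro ⟨a, ha, h⟩; rwa [← hf h]
  · exact fun h => Subgroup.mem_map_of_mem f h

end CongrHelpers

section Splice

variable {G : Type*} [Group G] (K : Subgroup G) [K.Normal]
variable (S : GroupCompSeries ↥K) (T : GroupCompSeries (G ⧸ K))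

def spliceFun : Fin (S.len + T.len + 1) → Subgroup G := fun i =>
  if h : (i : ℕ) ≤ S.len then Subgroup.map K.subtype (S.ser ⟨i, by omega⟩)
  else Subgroup.comap (QuotientGroup.mk' K)
    (T.ser ⟨(i : ℕ) - S.len, by have := i.isLt; omega⟩)

theorem spliceFun_low (i : Fin (S.len + T.len + 1)) (j : Fin (S.len + 1))
    (h : (i : ℕ) = (j : ℕ)) :
    spliceFun K S T i = Subgroup.map K.subtype (S.ser j) := by
  have hle : (i : ℕ) ≤ S.len := by have := j.isLt; omega
  rw [spliceFun, dif_pos hle]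
  exact congrArg _ (congrArg S.ser (Fin.ext h))

theorem spliceFun_high (i : Fin (S.len + T.len + 1)) (j : Fin (T.len + 1))
    (h : (i : ℕ) = S.len + (j : ℕ)) :
    spliceFun K S T i = Subgroup.comap (QuotientGroup.mk' K) (T.ser j) := by
  rcases Nat.eq_zero_or_pos (j : ℕ) with hj0 | hjpos
  · have hle : (i : ℕ) ≤ S.len := by omega
    rw [spliceFun, dif_pos hle]
    have h1 : S.ser ⟨(i : ℕ), by omega⟩ = ⊤ := by
      rw [← S.ser_top]; exact congrArg S.ser (Fin.ext (by simp [Fin.last]; omega))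
    have h2 : T.ser j = ⊥ := by
      rw [← T.ser_bot]; exact congrArg T.ser (Fin.ext (by rw [Fin.val_zero]; omega))
    rw [h1, h2, MonoidHom.comap_bot, QuotientGroup.ker_mk', ← MonoidHom.range_eq_map,
      Subgroup.range_subtype]
  · rw [spliceFun, dif_neg (by omega)]
    exact congrArg _ (congrArg T.ser (Fin.ext (by simp; omega)))

theorem splice_step_low (i : Fin (S.len + T.len)) (h : (i : ℕ) < S.len) :
    spliceFun K S T i.castSucc
        = Subgroup.map K.subtype (S.ser (⟨(i : ℕ), h⟩ : Fin S.len).castSucc) ∧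
    spliceFun K S T i.succ
        = Subgroup.map K.subtype (S.ser (⟨(i : ℕ), h⟩ : Fin S.len).succ) :=
  ⟨spliceFun_low K S T _ _ (by simp), spliceFun_low K S T _ _ (by simp)⟩

theorem splice_step_high (i : Fin (S.len + T.len)) (h : S.len ≤ (i : ℕ)) :
    spliceFun K S T i.castSucc
        = Subgroup.comap (QuotientGroup.mk' K)
            (T.ser (⟨(i : ℕ) - S.len, by have := i.isLt; omega⟩ : Fin T.len).castSucc) ∧
    spliceFun K S T i.succ
        = Subgroup.comap (QuotientGroup.mk' K)
            (T.ser (⟨(i : ℕ) - S.len, by have := i.isLt; omega⟩ : Fin T.len).succ) :=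
  ⟨spliceFun_high K S T _ _ (by simp; omega), spliceFun_high K S T _ _ (by simp [Fin.val_succ]; omega)⟩

def splice : GroupCompSeries G where
  len := S.len + T.len
  ser := spliceFun K S T
  ser_bot := by
    rw [spliceFun_low K S T 0 0 rfl, S.ser_bot, Subgroup.map_bot]
  ser_top := by
    rw [spliceFun_high K S T (Fin.last _) (Fin.last _) (by simp [Fin.last]), T.ser_top,
      Subgroup.comap_top]
  ser_le i := by
    rcases lt_or_ge (i : ℕ) S.len with h | h
    · obtain ⟨h1, h2⟩ := splice_step_low K S T i h
      rw [h1, h2]; exact Subgroup.map_mono (S.ser_le _)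
    · obtain ⟨h1, h2⟩ := splice_step_high K S T i h
      rw [h1, h2]; exact Subgroup.comap_mono (T.ser_le _)
  ser_normal i := by
    rcases lt_or_ge (i : ℕ) S.len with h | h
    · obtain ⟨h1, h2⟩ := splice_step_low K S T i h
      exact normal_factor_congr h1.symm h2.symm
        (transfer_normal K.subtype rfl
          (fun b _ => mem_map_iff_of_inj K.subtype_injective _ b) (S.ser_normal _))
    · obtain ⟨h1, h2⟩ := splice_step_high K S T i h
      set j : Fin T.len := ⟨(i : ℕ) - S.len, by have := i.isLt; omega⟩ with hj
      exact normal_factor_congr h1.symm h2.symm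
        (transfer_normal_rev (QuotientGroup.mk' K)
          (A := Subgroup.comap (QuotientGroup.mk' K) (T.ser j.castSucc))
          (A' := T.ser j.castSucc)
          (Subgroup.map_comap_eq_self_of_surjective (QuotientGroup.mk'_surjective K) _)
          (fun b _ => Iff.rfl) (T.ser_normal j))
  ser_simple i := by
    rcases lt_or_ge (i : ℕ) S.len with h | h
    · obtain ⟨h1, h2⟩ := splice_step_low K S T i h
      have hN := S.ser_normal (⟨(i : ℕ), h⟩ : Fin S.len)
      have hN' := transfer_normal K.subtype (A := S.ser (⟨(i : ℕ), h⟩ : Fin S.len).castSucc)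
          (B := S.ser (⟨(i : ℕ), h⟩ : Fin S.len).succ) rfl
          (fun b _ => mem_map_iff_of_inj K.subtype_injective _ b) hN
      exact simple_factor_congr h1.symm h2.symm hN'
        (transfer_simple K.subtype rfl
          (fun b _ => mem_map_iff_of_inj K.subtype_injective _ b) hN hN' (S.ser_simple _))
        (normal_factor_congr h1.symm h2.symm hN')
    · obtain ⟨h1, h2⟩ := splice_step_high K S T i h
      set j : Fin T.len := ⟨(i : ℕ) - S.len, by have := i.isLt; omega⟩ with hj
      have hN' := T.ser_normal j
      have hN := transfer_normal_rev (QuotientGroup.mk' K)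
          (A := Subgroup.comap (QuotientGroup.mk' K) (T.ser j.castSucc))
          (A' := T.ser j.castSucc)
          (Subgroup.map_comap_eq_self_of_surjective (QuotientGroup.mk'_surjective K) _)
          (fun b _ => Iff.rfl) hN'
      exact simple_factor_congr h1.symm h2.symm hN
        (simple_of_mulEquiv (transferEquiv (QuotientGroup.mk' K)
          (A := Subgroup.comap (QuotientGroup.mk' K) (T.ser j.castSucc))
          (A' := T.ser j.castSucc)
          (Subgroup.map_comap_eq_self_of_surjective (QuotientGroup.mk'_surjective K) _)
          (fun b _ => Iff.rfl) hN hN').symm (T.ser_simple j))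
        (normal_factor_congr h1.symm h2.symm hN)

end Splice

section SpliceCount

variable {G : Type*} [Group G] (K : Subgroup G) [K.Normal]
variable (S : GroupCompSeries ↥K) (T : GroupCompSeries (G ⧸ K))

theorem splice_card_low (i : Fin S.len) :
    Nat.card (↥((splice K S T).ser ((Fin.castAdd T.len i).succ)) ⧸
        ((splice K S T).ser ((Fin.castAdd T.len i).castSucc)).subgroupOf
          ((splice K S T).ser ((Fin.castAdd T.len i).succ)))
      = Nat.card (↥(S.ser i.succ) ⧸ (S.ser i.castSucc).subgroupOf (S.ser i.succ)) := by
  obtain ⟨h1, h2⟩ := splice_step_low K S T (Fin.castAdd T.len i) i.isLt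
  have hidx : (⟨((Fin.castAdd T.len i) : ℕ), i.isLt⟩ : Fin S.len) = i := Fin.ext rfl
  rw [hidx] at h1 h2
  have hN := S.ser_normal i
  have hN' := transfer_normal K.subtype (A := S.ser i.castSucc) (B := S.ser i.succ) rfl
      (fun b _ => mem_map_iff_of_inj K.subtype_injective _ b) hN
  exact (card_factor_congr h1 h2).trans
    (transfer_card K.subtype rfl
      (fun b _ => mem_map_iff_of_inj K.subtype_injective _ b) hN hN').symm

theorem splice_card_high (i : Fin T.len) :
    Nat.card (↥((splice K S T).ser ((Fin.natAdd S.len i).succ)) ⧸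
        ((splice K S T).ser ((Fin.natAdd S.len i).castSucc)).subgroupOf
          ((splice K S T).ser ((Fin.natAdd S.len i).succ)))
      = Nat.card (↥(T.ser i.succ) ⧸ (T.ser i.castSucc).subgroupOf (T.ser i.succ)) := by
  obtain ⟨h1, h2⟩ := splice_step_high K S T (Fin.natAdd S.len i)
    (by show S.len ≤ S.len + (i : ℕ); omega)
  have hidx : (⟨((Fin.natAdd S.len i) : ℕ) - S.len,
      by have hi := i.isLt; show S.len + (i : ℕ) - S.len < T.len; omega⟩
      : Fin T.len) = i := Fin.ext (by show S.len + (i : ℕ) - S.len = (i : ℕ); omega)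
  rw [hidx] at h1 h2
  have hN' := T.ser_normal i
  have hN := transfer_normal_rev (QuotientGroup.mk' K)
      (A := Subgroup.comap (QuotientGroup.mk' K) (T.ser i.castSucc))
      (A' := T.ser i.castSucc)
      (Subgroup.map_comap_eq_self_of_surjective (QuotientGroup.mk'_surjective K) _)
      (fun b _ => Iff.rfl) hN'
  exact (card_factor_congr h1 h2).trans
    (transfer_card (QuotientGroup.mk' K)
      (A := Subgroup.comap (QuotientGroup.mk' K) (T.ser i.castSucc))
      (A' := T.ser i.castSucc)
      (Subgroup.map_comap_eq_self_of_surjective (QuotientGroup.mk'_surjective K) _)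
      (fun b _ => Iff.rfl) hN hN')

theorem splice_count (p : ℕ) :
    (splice K S T).count p = S.count p + T.count p := by
  classical
  unfold GroupCompSeries.count
  simp only [Finset.card_filter]
  have key : (∑ i : Fin (S.len + T.len),
      if Nat.card (↥((splice K S T).ser i.succ) ⧸
          ((splice K S T).ser i.castSucc).subgroupOf ((splice K S T).ser i.succ)) = p
      then 1 else 0)
      = (∑ i : Fin S.len,
          if Nat.card (↥(S.ser i.succ) ⧸ (S.ser i.castSucc).subgroupOf (S.ser i.succ)) = p
          then 1 else 0)
        + ∑ i : Fin T.len,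
          if Nat.card (↥(T.ser i.succ) ⧸ (T.ser i.castSucc).subgroupOf (T.ser i.succ)) = p
          then 1 else 0 := by
    rw [Fin.sum_univ_add]
    congr 1
    · exact Finset.sum_congr rfl (fun i _ => by rw [splice_card_low K S T i])
    · exact Finset.sum_congr rfl (fun i _ => by rw [splice_card_high K S T i])
  exact key

end SpliceCount

section Existence

theorem count_zero_of_len_zero {X : Type*} [Group X] (S : GroupCompSeries X) (h : S.len = 0)
    (p : ℕ) : S.count p = 0 := by
  classical
  unfold GroupCompSeries.count
  rw [Finset.card_eq_zero, Finset.eq_empty_iff_forall_notMem]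
  intro i _
  have h1 : (i : ℕ) < S.len := i.isLt
  omega

def trivialGCS (X : Type*) [Group X] [Subsingleton X] : GroupCompSeries X where
  len := 0
  ser _ := ⊥
  ser_bot := rfl
  ser_top := by
    have : (⊥ : Subgroup X) = ⊤ := by
      ext x
      have hx : x = 1 := Subsingleton.elim _ _
      subst hx; simp
    rw [this]
  ser_le i := i.elim0
  ser_normal i := i.elim0
  ser_simple i := i.elim0

theorem cp_of_subsingleton (X : Type*) [Group X] [Subsingleton X] (p : ℕ) : cp p X = 0 := by
  rw [cp_eq_count (trivialGCS X) p]
  exact count_zero_of_len_zero _ rfl p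

def simpleGCS (X : Type*) [Group X] (h : IsSimpleGroup X) : GroupCompSeries X where
  len := 1
  ser i := if (i : ℕ) = 0 then ⊥ else ⊤
  ser_bot := by simp
  ser_top := by simp [Fin.last]
  ser_le i := by
    have : (i : ℕ) = 0 := by omega
    simp [this, Fin.val_succ]
  ser_normal i := by
    have h0 : (i : ℕ) = 0 := by omega
    have h1 : (if ((i.castSucc : Fin 2) : ℕ) = 0 then (⊥ : Subgroup X) else ⊤) = ⊥ := by
      simp [h0]
    have h2 : (if ((i.succ : Fin 2) : ℕ) = 0 then (⊥ : Subgroup X) else ⊤) = ⊤ := by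
      simp [Fin.val_succ, h0]
    exact normal_factor_congr h1.symm h2.symm (by rw [Subgroup.bot_subgroupOf]; infer_instance)
  ser_simple i := by
    have h0 : (i : ℕ) = 0 := by omega
    have h1 : (if ((i.castSucc : Fin 2) : ℕ) = 0 then (⊥ : Subgroup X) else ⊤) = ⊥ := by
      simp [h0]
    have h2 : (if ((i.succ : Fin 2) : ℕ) = 0 then (⊥ : Subgroup X) else ⊤) = ⊤ := by
      simp [Fin.val_succ, h0]
    have hn : ((⊥ : Subgroup X).subgroupOf ⊤).Normal := by
      rw [Subgroup.bot_subgroupOf]; infer_instance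
    have hs : haveI := hn; IsSimpleGroup (↥(⊤ : Subgroup X) ⧸ (⊥ : Subgroup X).subgroupOf ⊤) := by
      haveI := hn
      have e : (↥(⊤ : Subgroup X) ⧸ (⊥ : Subgroup X).subgroupOf ⊤) ≃* X :=
        ((QuotientGroup.quotientMulEquivOfEq
          (Subgroup.bot_subgroupOf (⊤ : Subgroup X))).trans
            QuotientGroup.quotientBot).trans Subgroup.topEquiv
      exact simple_of_mulEquiv e.symm h
    exact simple_factor_congr h1.symm h2.symm hn hs
      (normal_factor_congr h1.symm h2.symm hn)

end Existence

section MaxNormal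

theorem exists_maximal_normal (X : Type*) [Group X] [Finite X] [Nontrivial X] :
    ∃ K : Subgroup X, K.Normal ∧ K ≠ ⊤ ∧ ∀ L : Subgroup X, L.Normal → K < L → L = ⊤ := by
  classical
  set s : Set (Subgroup X) := {K | K.Normal ∧ K ≠ ⊤} with hs
  have hbot : (⊥ : Subgroup X) ∈ s := ⟨inferInstance, bot_ne_top⟩
  obtain ⟨K, hKs, hmax⟩ := Set.Finite.exists_maximalFor id s (Set.toFinite s) ⟨⊥, hbot⟩
  refine ⟨K, hKs.1, hKs.2, fun L hL hKL => ?_⟩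
  by_contra hne
  exact lt_irrefl K (lt_of_lt_of_le hKL (hmax ⟨hL, hne⟩ hKL.le))

theorem simple_quot_of_maximal {X : Type*} [Group X] (K : Subgroup X) [K.Normal] (hne : K ≠ ⊤)
    (hmax : ∀ L : Subgroup X, L.Normal → K < L → L = ⊤) : IsSimpleGroup (X ⧸ K) := by
  haveI hnontriv : Nontrivial (X ⧸ K) := by
    obtain ⟨x, hx⟩ : ∃ x, x ∉ K := by
      by_contra hall; push_neg at hall
      exact hne (by ext y; simpa using hall y)
    exact ⟨⟨QuotientGroup.mk x, 1, fun h => hx ((QuotientGroup.eq_one_iff x).1 h)⟩⟩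
  constructor
  intro N hN
  have hJn : (N.comap (QuotientGroup.mk' K)).Normal := hN.comap _
  have hKJ : K ≤ N.comap (QuotientGroup.mk' K) := by
    intro k hk
    show QuotientGroup.mk' K k ∈ N
    have h1 : QuotientGroup.mk' K k = 1 := (QuotientGroup.eq_one_iff k).2 hk
    rw [h1]; exact one_mem N
  have hNmap : (N.comap (QuotientGroup.mk' K)).map (QuotientGroup.mk' K) = N :=
    Subgroup.map_comap_eq_self_of_surjective (QuotientGroup.mk'_surjective K) N
  rcases eq_or_lt_of_le hKJ with heq | hlt
  · left
    rw [← hNmap, ← heq, Subgroup.map_eq_bot_iff, QuotientGroup.ker_mk']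
  · right
    rw [← hNmap, hmax _ hJn hlt, Subgroup.map_top_of_surjective _ (QuotientGroup.mk'_surjective K)]

theorem exists_gcs_aux (n : ℕ) : ∀ (X : Type) [Group X] [Finite X],
    Nat.card X ≤ n → Nonempty (GroupCompSeries X) := by
  induction n with
  | zero =>
    intro X _ _ h
    have : 0 < Nat.card X := Nat.card_pos
    omega
  | succ n ih =>
    intro X _ _ hcard
    by_cases hsub : Subsingleton X
    · exact ⟨trivialGCS X⟩
    · haveI : Nontrivial X := not_subsingleton_iff_nontrivial.mp hsub
      obtain ⟨K, hKn, hKne, hKmax⟩ := exists_maximal_normal X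
      haveI := hKn
      have hsimple : IsSimpleGroup (X ⧸ K) := simple_quot_of_maximal K hKne hKmax
      have hKlt : Nat.card ↥K < Nat.card X := by
        have hle : Nat.card ↥K ≤ Nat.card X :=
          Nat.card_le_card_of_injective _ K.subtype_injective
        rcases lt_or_eq_of_le hle with h | h
        · exact h
        · exact absurd (Subgroup.eq_top_of_card_eq K h) hKne
      obtain ⟨S⟩ := ih ↥K (by omega)
      exact ⟨splice K S (simpleGCS _ hsimple)⟩

theorem exists_gcs (X : Type) [Group X] [Finite X] : Nonempty (GroupCompSeries X) :=
  exists_gcs_aux (Nat.card X) X le_rfl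

end MaxNormal

section CP

theorem cp_add (X : Type) [Group X] [Finite X] (K : Subgroup X) [K.Normal] (p : ℕ) :
    cp p X = cp p ↥K + cp p (X ⧸ K) := by
  obtain ⟨S⟩ := exists_gcs ↥K
  obtain ⟨T⟩ := exists_gcs (X ⧸ K)
  rw [cp_eq_count (splice K S T) p, splice_count K S T p, ← cp_eq_count S p, ← cp_eq_count T p]

def mapGCS {X Y : Type*} [Group X] [Group Y] (e : X ≃* Y) (S : GroupCompSeries X) :
    GroupCompSeries Y where
  len := S.len
  ser i := (S.ser i).map e.toMonoidHom
  ser_bot := by show (S.ser 0).map e.toMonoidHom = ⊥; rw [S.ser_bot, Subgroup.map_bot]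
  ser_top := by
    show (S.ser (Fin.last S.len)).map e.toMonoidHom = ⊤
    rw [S.ser_top, Subgroup.map_top_of_surjective _ e.surjective]
  ser_le i := Subgroup.map_mono (S.ser_le i)
  ser_normal i := transfer_normal e.toMonoidHom rfl
    (fun b _ => mem_map_iff_of_inj e.injective _ b) (S.ser_normal i)
  ser_simple i := by
    have hN := S.ser_normal i
    have hN' := transfer_normal e.toMonoidHom (A := S.ser i.castSucc) (B := S.ser i.succ) rfl
      (fun b _ => mem_map_iff_of_inj e.injective _ b) hN
    exact transfer_simple e.toMonoidHom rfl
      (fun b _ => mem_map_iff_of_inj e.injective _ b) hN hN' (S.ser_simple i)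

theorem mapGCS_count {X Y : Type*} [Group X] [Group Y] (e : X ≃* Y) (S : GroupCompSeries X)
    (p : ℕ) : (mapGCS e S).count p = S.count p := by
  classical
  have hcard : ∀ i : Fin S.len,
      Nat.card (↥((mapGCS e S).ser i.succ) ⧸
        ((mapGCS e S).ser i.castSucc).subgroupOf ((mapGCS e S).ser i.succ))
      = Nat.card (↥(S.ser i.succ) ⧸ (S.ser i.castSucc).subgroupOf (S.ser i.succ)) := by
    intro i
    have hN := S.ser_normal i
    have hN' := transfer_normal e.toMonoidHom (A := S.ser i.castSucc) (B := S.ser i.succ) rfl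
      (fun b _ => mem_map_iff_of_inj e.injective _ b) hN
    exact (transfer_card e.toMonoidHom rfl
      (fun b _ => mem_map_iff_of_inj e.injective _ b) hN hN').symm
  unfold GroupCompSeries.count
  refine Finset.card_bij' (fun i _ => i) (fun i _ => i) ?_ ?_ (fun _ _ => rfl) (fun _ _ => rfl)
  · intro i hi
    simp only [Finset.mem_filter, Finset.mem_univ, true_and] at hi ⊢
    exact Finset.mem_filter.mpr ⟨Finset.mem_univ _, (hcard i).symm.trans hi⟩
  · intro j hj
    simp only [Finset.mem_filter, Finset.mem_univ, true_and] at hj ⊢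
    exact Finset.mem_filter.mpr ⟨Finset.mem_univ _, (hcard j).trans hj⟩

theorem cp_congr {X Y : Type*} [Group X] [Group Y] (e : X ≃* Y) (p : ℕ) : cp p X = cp p Y := by
  by_cases h : Nonempty (GroupCompSeries X)
  · obtain ⟨S⟩ := h
    rw [cp_eq_count S p, cp_eq_count (mapGCS e S) p, mapGCS_count]
  · have h' : ¬ Nonempty (GroupCompSeries Y) := fun ⟨T⟩ => h ⟨mapGCS e.symm T⟩
    unfold cp
    rw [dif_neg h, dif_neg h']

theorem cp_le_of_le_normal {M : Type} [Group M] {A B : Subgroup M} [Finite ↥B] (hAB : A ≤ B)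
    (hn : (A.subgroupOf B).Normal) (p : ℕ) : cp p ↥A ≤ cp p ↥B := by
  haveI := hn
  have h := cp_add ↥B (A.subgroupOf B) p
  have h2 : cp p ↥(A.subgroupOf B) = cp p ↥A := cp_congr (Subgroup.subgroupOfEquivOfLe hAB) p
  omega

theorem cp_surj_le {X Y : Type} [Group X] [Group Y] [Finite X] (f : X →* Y)
    (hf : Function.Surjective f) (p : ℕ) : cp p Y ≤ cp p X := by
  have e : (X ⧸ f.ker) ≃* Y := QuotientGroup.quotientKerEquivOfSurjective f hf
  rw [← cp_congr e p]
  have h := cp_add X f.ker p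
  omega

end CP

section Induction

theorem cp_pi_le (p : ℕ) : ∀ (r : ℕ) (H : Fin r → Type) [∀ i, Group (H i)]
    [∀ i, Finite (H i)] (Γ : Subgroup (∀ i, H i)),
    cp p ↥Γ ≤ ∑ i : Fin r, cp p ↥(Γ.map (Pi.evalMonoidHom H i)) := by
  intro r
  induction r with
  | zero =>
    intro H _ _ Γ
    haveI : Subsingleton (∀ i : Fin 0, H i) := ⟨fun a b => funext fun i => i.elim0⟩
    haveI : Subsingleton ↥Γ := ⟨fun a b => Subtype.ext (Subsingleton.elim _ _)⟩
    rw [cp_of_subsingleton ↥Γ p]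
    exact Nat.zero_le _
  | succ r ih =>
    intro H instG instF Γ
    set π : (∀ i, H i) →* H (Fin.last r) := Pi.evalMonoidHom H (Fin.last r) with hπ
    set φ : ↥Γ →* H (Fin.last r) := π.comp Γ.subtype with hφ
    have h1 : cp p ↥Γ = cp p ↥φ.ker + cp p (↥Γ ⧸ φ.ker) := cp_add ↥Γ φ.ker p
    have h2 : cp p (↥Γ ⧸ φ.ker) = cp p ↥(Γ.map π) := by
      have hrange : φ.range = Γ.map π := by
        rw [hφ, MonoidHom.range_comp, Subgroup.range_subtype]
      exact (cp_congr (QuotientGroup.quotientKerEquivRange φ) p).trans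
        (cp_congr (MulEquiv.subgroupCongr hrange) p)
    set ρ : (∀ i : Fin (r+1), H i) →* (∀ i : Fin r, H i.castSucc) :=
      { toFun := fun g i => g i.castSucc, map_one' := rfl, map_mul' := fun _ _ => rfl } with hρ
    set ψ : ↥φ.ker →* (∀ i : Fin r, H i.castSucc) :=
      ρ.comp (Γ.subtype.comp φ.ker.subtype) with hψ
    have hψ_apply : ∀ (k : ↥φ.ker) (i : Fin r),
        ψ k i = ((k : ↥Γ) : ∀ j, H j) i.castSucc := fun _ _ => rfl
    have hψinj : Function.Injective ψ := by
      intro a b hab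
      apply Subtype.ext; apply Subtype.ext
      funext i
      induction i using Fin.lastCases with
      | last =>
        have ha : ((a : ↥Γ) : ∀ j, H j) (Fin.last r) = 1 := a.2
        have hb : ((b : ↥Γ) : ∀ j, H j) (Fin.last r) = 1 := b.2
        rw [ha, hb]
      | cast i => exact congrFun hab i
    have h3 : cp p ↥φ.ker = cp p ↥ψ.range := cp_congr (MonoidHom.ofInjective hψinj) p
    have h4 := ih (fun i => H i.castSucc) ψ.range
    have h5 : ∀ i : Fin r,
        cp p ↥(ψ.range.map (Pi.evalMonoidHom (fun j : Fin r => H j.castSucc) i))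
        ≤ cp p ↥(Γ.map (Pi.evalMonoidHom H i.castSucc)) := by
      intro i
      set L : Subgroup (H i.castSucc) :=
        ψ.range.map (Pi.evalMonoidHom (fun j : Fin r => H j.castSucc) i) with hL
      set L' : Subgroup (H i.castSucc) := Γ.map (Pi.evalMonoidHom H i.castSucc) with hL'
      have hmemL : ∀ x : H i.castSucc,
          x ∈ L ↔ ∃ g : (∀ j, H j), g ∈ Γ ∧ g (Fin.last r) = 1 ∧ g i.castSucc = x := by
        intro x
        constructor
        · rintro ⟨d, ⟨k, rfl⟩, rfl⟩
          exact ⟨((k : ↥Γ) : ∀ j, H j), (k : ↥Γ).2, k.2, rfl⟩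
        · rintro ⟨g, hgΓ, hglast, rfl⟩
          have hk : (⟨g, hgΓ⟩ : ↥Γ) ∈ φ.ker := hglast
          exact ⟨ψ ⟨⟨g, hgΓ⟩, hk⟩, ⟨⟨⟨g, hgΓ⟩, hk⟩, rfl⟩, rfl⟩
      have hLle : L ≤ L' := by
        intro x hx
        obtain ⟨g, hgΓ, _, hgx⟩ := (hmemL x).1 hx
        exact ⟨g, hgΓ, hgx⟩
      have hnorm : (L.subgroupOf L').Normal := by
        constructor
        rintro ⟨n, hnL'⟩ hn ⟨y, hyL'⟩
        rw [Subgroup.mem_subgroupOf] at hn ⊢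
        obtain ⟨gn, hgnΓ, hgn1, hgnx⟩ := (hmemL n).1 hn
        obtain ⟨gy, hgyΓ, hgyx⟩ := hyL'
        show y * n * y⁻¹ ∈ L
        refine (hmemL _).2 ⟨gy * gn * gy⁻¹, mul_mem (mul_mem hgyΓ hgnΓ) (inv_mem hgyΓ), ?_, ?_⟩
        · show gy (Fin.last r) * gn (Fin.last r) * (gy (Fin.last r))⁻¹ = 1
          rw [hgn1, mul_one, mul_inv_cancel]
        · show gy i.castSucc * gn i.castSucc * (gy i.castSucc)⁻¹ = y * n * y⁻¹
          rw [hgnx, ← hgyx]; rfl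
      exact cp_le_of_le_normal hLle hnorm p
    have h6 : cp p ↥ψ.range ≤ ∑ i : Fin r, cp p ↥(Γ.map (Pi.evalMonoidHom H i.castSucc)) :=
      le_trans h4 (Finset.sum_le_sum (fun i _ => h5 i))
    calc cp p ↥Γ = cp p ↥φ.ker + cp p (↥Γ ⧸ φ.ker) := h1
      _ = cp p ↥ψ.range + cp p ↥(Γ.map π) := by rw [h2, h3]
      _ ≤ (∑ i : Fin r, cp p ↥(Γ.map (Pi.evalMonoidHom H i.castSucc)))
          + cp p ↥(Γ.map (Pi.evalMonoidHom H (Fin.last r))) := Nat.add_le_add h6 le_rfl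
      _ = ∑ i : Fin (r+1), cp p ↥(Γ.map (Pi.evalMonoidHom H i)) :=
          (Fin.sum_univ_castSucc (fun i : Fin (r+1) =>
            cp p ↥(Γ.map (Pi.evalMonoidHom H i)))).symm

end Induction

/-- If `G` is a subgroup of a central product `(H_1 × ⋯ × H_r)/N` (with `N` central) whose
full preimage projects onto each `H_i`, then `c_p(G) ≤ c_p(H_1) + ⋯ + c_p(H_r)`. -/
theorem cp_le_sum_of_subgroup_central_product (p : ℕ) (hp : p.Prime)
    (r : ℕ) (H : Fin r → Type) [∀ i, Group (H i)] [∀ i, Finite (H i)]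
    (N : Subgroup (∀ i, H i)) [N.Normal] (hN : N ≤ Subgroup.center (∀ i, H i))
    (G : Subgroup ((∀ i, H i) ⧸ N))
    (hsurj : ∀ i : Fin r, ∀ x : H i, ∃ g ∈ G.comap (QuotientGroup.mk' N), g i = x) :
    cp p ↥G ≤ ∑ i : Fin r, cp p (H i) := by
  classical
  set Γ : Subgroup (∀ i, H i) := G.comap (QuotientGroup.mk' N) with hΓ
  have hmap : Γ.map (QuotientGroup.mk' N) = G :=
    Subgroup.map_comap_eq_self_of_surjective (QuotientGroup.mk'_surjective N) G
  have step1 : cp p ↥G ≤ cp p ↥Γ := by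
    have hsurj2 : Function.Surjective ((QuotientGroup.mk' N).subgroupMap Γ) :=
      (QuotientGroup.mk' N).subgroupMap_surjective Γ
    have hle := cp_surj_le ((QuotientGroup.mk' N).subgroupMap Γ) hsurj2 p
    exact le_trans (le_of_eq (cp_congr (MulEquiv.subgroupCongr hmap) p).symm) hle
  have step2 := cp_pi_le p r H Γ
  have step3 : ∀ i, Γ.map (Pi.evalMonoidHom H i) = ⊤ := by
    intro i
    rw [eq_top_iff]
    intro x _
    obtain ⟨g, hg, hgx⟩ := hsurj i x
    exact ⟨g, hg, hgx⟩
  have step4 : ∀ i, cp p ↥(Γ.map (Pi.evalMonoidHom H i)) = cp p (H i) := by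
    intro i
    rw [step3 i]
    exact cp_congr Subgroup.topEquiv p
  calc cp p ↥G ≤ cp p ↥Γ := step1
    _ ≤ ∑ i : Fin r, cp p ↥(Γ.map (Pi.evalMonoidHom H i)) := step2
    _ = ∑ i : Fin r, cp p (H i) := Finset.sum_congr rfl (fun i _ => step4 i)
end

section
/- Let p be an odd prime, let r be a prime with r ≡ 1 (mod p), let f = p^k for some integer k ≥ 1, let q = r^f, and let d ≥ 1. Then c_p(GL(d,q)) ≥ v_p(r−1) + k. In particular, when p does not divide q, c_p of completely reducible subgroups of GL(d,q) cannot be bounded by a function of d and p alone. -/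
open Subgroup

lemma Ex9.isSimpleGroup_of_mulEquiv {G H : Type*} [Group G] [Group H] (e : G ≃* H)
    [IsSimpleGroup G] : IsSimpleGroup H := by
  haveI : Nontrivial H := e.symm.toEquiv.nontrivial
  exact IsSimpleGroup.isSimpleGroup_of_surjective e.toMonoidHom e.surjective

lemma Ex9.map_subgroupOf_eq {H G : Type*} [Group H] [Group G] (f : H →* G)
    (hf : Function.Injective f) {K L : Subgroup H} (hKL : K ≤ L) :
    (K.subgroupOf L).map (L.equivMapOfInjective f hf).toMonoidHom
      = (K.map f).subgroupOf (L.map f) := by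
  ext x
  rw [Subgroup.mem_map, mem_subgroupOf]
  constructor
  · rintro ⟨y, hy, rfl⟩
    rw [mem_subgroupOf] at hy
    exact ⟨(y : H), hy, by rw [MulEquiv.coe_toMonoidHom, L.coe_equivMapOfInjective_apply]⟩
  · intro hx
    obtain ⟨z, hz, hzx⟩ := hx
    refine ⟨⟨z, hKL hz⟩, ?_, ?_⟩
    · rw [mem_subgroupOf]; exact hz
    · apply Subtype.ext
      rw [MulEquiv.coe_toMonoidHom, L.coe_equivMapOfInjective_apply]
      exact hzx

lemma Ex9.step_transfer {H G : Type*} [Group H] [Group G] (f : H →* G)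
    (hf : Function.Injective f) {K L : Subgroup H} (hKL : K ≤ L)
    [hn : (K.subgroupOf L).Normal] :
    ∃ _ : ((K.map f).subgroupOf (L.map f)).Normal,
      Nonempty ((↥(L.map f) ⧸ (K.map f).subgroupOf (L.map f)) ≃* (↥L ⧸ K.subgroupOf L)) := by
  have h := Ex9.map_subgroupOf_eq f hf hKL
  have hnorm : ((K.map f).subgroupOf (L.map f)).Normal := by
    rw [← h]
    exact hn.map _ (L.equivMapOfInjective f hf).surjective
  refine ⟨hnorm, ⟨?_⟩⟩
  exact (QuotientGroup.congr (K.subgroupOf L) ((K.map f).subgroupOf (L.map f))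
    (L.equivMapOfInjective f hf) h).symm

lemma Ex9.top_quot_equiv {G : Type*} [Group G] (M : Subgroup G) [M.Normal] :
    Nonempty ((↥(⊤ : Subgroup G) ⧸ M.subgroupOf ⊤) ≃* (G ⧸ M)) := by
  refine ⟨QuotientGroup.congr (M.subgroupOf ⊤) M Subgroup.topEquiv ?_⟩
  ext x
  simp [Subgroup.mem_map, Subgroup.mem_subgroupOf]

universe u

lemma Ex9.exists_series_aux (n : ℕ) : ∀ (G : Type u) [Group G] [Finite G],
    Nat.card G ≤ n → Nonempty (GroupCompSeries G) := by
  induction n with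
  | zero =>
    intro G _ _ h
    have := Nat.card_pos (α := G)
    omega
  | succ n ih =>
    intro G _ _ hcard
    by_cases hG : Subsingleton G
    · refine ⟨⟨0, fun _ => ⊥, rfl, ?_, fun i => i.elim0, fun i => i.elim0, fun i => i.elim0⟩⟩
      ext x
      simp [Subsingleton.elim x 1]
    · rw [not_subsingleton_iff_nontrivial] at hG
      have hbot : (⊥ : Subgroup G).Normal ∧ (⊥ : Subgroup G) ≠ ⊤ := by
        refine ⟨inferInstance, fun h => ?_⟩
        obtain ⟨x, hx⟩ := exists_ne (1 : G)
        exact hx (Subgroup.mem_bot.mp (h ▸ Subgroup.mem_top x))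
      obtain ⟨M, -, hM⟩ := Finite.exists_le_maximal
        (p := fun N : Subgroup G => N.Normal ∧ N ≠ ⊤) hbot
      haveI hMn : M.Normal := hM.1.1
      have hMne : M ≠ ⊤ := hM.1.2
      haveI hnt : Nontrivial (G ⧸ M) := by
        have : ∃ x : G, x ∉ M := by
          by_contra hh
          push_neg at hh
          exact hMne ((Subgroup.eq_top_iff' M).mpr hh)
        obtain ⟨x, hx⟩ := this
        exact ⟨⟨(x : G ⧸ M), 1, by simpa [QuotientGroup.eq_one_iff] using hx⟩⟩
      haveI hQs : IsSimpleGroup (G ⧸ M) := by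
        constructor
        intro H hH
        have hK : (H.comap (QuotientGroup.mk' M)).Normal := hH.comap _
        have hMK : M ≤ H.comap (QuotientGroup.mk' M) := by
          intro m hm
          have h1 : (QuotientGroup.mk' M) m = 1 := (QuotientGroup.eq_one_iff m).mpr hm
          simp only [Subgroup.mem_comap, h1]
          exact H.one_mem
        have hmap : (H.comap (QuotientGroup.mk' M)).map (QuotientGroup.mk' M) = H :=
          Subgroup.map_comap_eq_self_of_surjective (QuotientGroup.mk'_surjective M) H
        by_cases htop : H.comap (QuotientGroup.mk' M) = ⊤
        · right
          rw [← hmap, htop]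
          exact Subgroup.map_top_of_surjective _ (QuotientGroup.mk'_surjective M)
        · left
          have hle := hM.2 (y := H.comap (QuotientGroup.mk' M)) ⟨hK, htop⟩ hMK
          have hKM : H.comap (QuotientGroup.mk' M) = M := le_antisymm hle hMK
          rw [← hmap, hKM, Subgroup.map_eq_bot_iff, QuotientGroup.ker_mk']
      have hltn : Nat.card ↥M ≤ n := by
        have hdvd : Nat.card ↥M ∣ Nat.card G := Subgroup.card_subgroup_dvd_card M
        have hne : Nat.card ↥M ≠ Nat.card G := fun h => hMne (Subgroup.eq_top_of_card_eq M h)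
        have hpos := Nat.card_pos (α := G)
        have := Nat.le_of_dvd hpos hdvd
        omega
      obtain ⟨S⟩ := ih ↥M hltn
      set g : Fin (S.len + 1 + 1) → Subgroup G :=
        Fin.snoc (fun i => (S.ser i).map M.subtype) ⊤ with hg
      have key : ∀ i : Fin (S.len + 1), g i.castSucc ≤ g i.succ ∧
          ∃ _ : ((g i.castSucc).subgroupOf (g i.succ)).Normal,
            IsSimpleGroup (↥(g i.succ) ⧸ (g i.castSucc).subgroupOf (g i.succ)) := by
        intro i
        refine Fin.lastCases ?_ ?_ i
        · have h1 : g (Fin.last S.len).castSucc = M := by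
            rw [hg, Fin.snoc_castSucc, S.ser_top, ← MonoidHom.range_eq_map,
              Subgroup.range_subtype]
          have h2 : g (Fin.last S.len).succ = ⊤ := by
            rw [hg, Fin.succ_last, Fin.snoc_last]
          rw [h1, h2]
          refine ⟨le_top, Subgroup.normal_subgroupOf, ?_⟩
          obtain ⟨e⟩ := Ex9.top_quot_equiv M
          exact Ex9.isSimpleGroup_of_mulEquiv e.symm
        · intro j
          have h1 : g (j.castSucc).castSucc = (S.ser j.castSucc).map M.subtype := by
            rw [hg, Fin.snoc_castSucc]
          have h2 : g (j.castSucc).succ = (S.ser j.succ).map M.subtype := by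
            rw [hg, Fin.succ_castSucc, Fin.snoc_castSucc]
          rw [h1, h2]
          haveI := S.ser_normal j
          haveI := S.ser_simple j
          obtain ⟨hn, ⟨e⟩⟩ := Ex9.step_transfer M.subtype M.subtype_injective (S.ser_le j)
          exact ⟨Subgroup.map_mono (S.ser_le j), hn, Ex9.isSimpleGroup_of_mulEquiv e.symm⟩
      refine ⟨⟨S.len + 1, g, ?_, ?_, fun i => (key i).1, fun i => (key i).2.choose,
        fun i => (key i).2.choose_spec⟩⟩
      · have : (0 : Fin (S.len + 1 + 1)) = (0 : Fin (S.len + 1)).castSucc := by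
          simp
        rw [this, hg, Fin.snoc_castSucc, S.ser_bot, Subgroup.map_bot]
      · rw [hg, Fin.snoc_last]

lemma Ex9.exists_series (G : Type u) [Group G] [Finite G] :
    Nonempty (GroupCompSeries G) :=
  Ex9.exists_series_aux (Nat.card G) G le_rfl

lemma Ex9.count_ge {G : Type*} [Group G] [Finite G] {p m : ℕ} (hp : p.Prime)
    (φ : G →* Multiplicative (ZMod (p ^ m))) (hφ : Function.Surjective φ)
    (S : GroupCompSeries G) : m ≤ S.count p := by
  classical
  haveI : NeZero (p ^ m) := ⟨pow_ne_zero m hp.pos.ne'⟩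
  haveI : Finite (Multiplicative (ZMod (p ^ m))) := Finite.of_equiv _ Multiplicative.ofAdd
  have key : ∀ i : Fin (S.len + 1),
      Nat.card ((S.ser i).map φ) ∣
        p ^ ((Finset.univ.filter fun j : Fin S.len => j.castSucc < i ∧
          Nat.card (↥(S.ser j.succ) ⧸ (S.ser j.castSucc).subgroupOf (S.ser j.succ)) = p).card) := by
    intro i
    induction i using Fin.induction with
    | zero =>
      rw [S.ser_bot, Subgroup.map_bot]
      simp
    | succ i ihi =>
      set B := (S.ser i.castSucc).map φ with hB
      set C := (S.ser i.succ).map φ with hC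
      have hBC : B ≤ C := Subgroup.map_mono (S.ser_le i)
      set small := (Finset.univ.filter fun j : Fin S.len => j.castSucc < i.castSucc ∧
          Nat.card (↥(S.ser j.succ) ⧸ (S.ser j.castSucc).subgroupOf (S.ser j.succ)) = p)
        with hsmall
      set big := (Finset.univ.filter fun j : Fin S.len => j.castSucc < i.succ ∧
          Nat.card (↥(S.ser j.succ) ⧸ (S.ser j.castSucc).subgroupOf (S.ser j.succ)) = p)
        with hbig
      have hsb : small ⊆ big := by
        intro j hj
        rw [hsmall, Finset.mem_filter] at hj
        rw [hbig, Finset.mem_filter]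
        obtain ⟨hu, h1, h2⟩ := hj
        exact ⟨hu, h1.trans Fin.castSucc_lt_succ, h2⟩
      by_cases hEq : B = C
      · rw [← hEq]
        exact ihi.trans (pow_dvd_pow p (Finset.card_le_card hsb))
      · -- the interesting case
        set χ : ↥C →* (Multiplicative (ZMod (p ^ m))) ⧸ B :=
          (QuotientGroup.mk' B).comp C.subtype with hχ
        have hker : χ.ker = B.subgroupOf C := by
          ext x
          simp [hχ, MonoidHom.mem_ker, QuotientGroup.eq_one_iff, Subgroup.mem_subgroupOf]
        have hrange : χ.range = C.map (QuotientGroup.mk' B) := by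
          rw [hχ, MonoidHom.range_comp, Subgroup.range_subtype]
        set D := C.map (QuotientGroup.mk' B) with hD
        have e1 : Nat.card (↥C ⧸ χ.ker) = Nat.card D := by
          rw [Nat.card_congr (QuotientGroup.quotientKerEquivRange χ).toEquiv, hrange]
        have e2 : Nat.card χ.ker = Nat.card B := by
          rw [hker]
          exact Nat.card_congr (Subgroup.subgroupOfEquivOfLe hBC).toEquiv
        have hcardC : Nat.card C = Nat.card D * Nat.card B := by
          rw [Subgroup.card_eq_card_quotient_mul_card_subgroup χ.ker, e1, e2]
        have hDbot : D ≠ ⊥ := by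
          intro h
          apply hEq
          refine le_antisymm hBC fun x hx => ?_
          have : QuotientGroup.mk' B x ∈ D := Subgroup.mem_map_of_mem _ hx
          rw [h, Subgroup.mem_bot] at this
          exact (QuotientGroup.eq_one_iff x).mp this
        -- the map from the simple factor
        set ψ : ↥(S.ser i.succ) →* (Multiplicative (ZMod (p ^ m))) ⧸ B :=
          (QuotientGroup.mk' B).comp (φ.comp (S.ser i.succ).subtype) with hψ
        have hker2 : ∀ x ∈ (S.ser i.castSucc).subgroupOf (S.ser i.succ), ψ x = 1 := by
          intro x hx
          rw [Subgroup.mem_subgroupOf] at hx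
          simp only [hψ, MonoidHom.comp_apply]
          rw [QuotientGroup.mk'_apply, QuotientGroup.eq_one_iff]
          exact Subgroup.mem_map_of_mem φ hx
        haveI := S.ser_normal i
        haveI := S.ser_simple i
        set ψ' := QuotientGroup.lift ((S.ser i.castSucc).subgroupOf (S.ser i.succ)) ψ hker2
          with hψ'
        have hrange' : ψ'.range = D := by
          have h1 : ψ'.range = ψ.range := by
            ext y
            constructor
            · rintro ⟨q, rfl⟩
              obtain ⟨x, rfl⟩ := QuotientGroup.mk'_surjective _ q
              exact ⟨x, rfl⟩
            · rintro ⟨x, rfl⟩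
              exact ⟨QuotientGroup.mk' _ x, rfl⟩
          rw [h1, hψ, MonoidHom.range_comp, MonoidHom.range_comp, Subgroup.range_subtype, hD, hC]
        have hinj : Function.Injective ψ' := by
          rw [← MonoidHom.ker_eq_bot_iff]
          rcases (MonoidHom.normal_ker ψ').eq_bot_or_eq_top with h | h
          · exact h
          · exfalso
            apply hDbot
            rw [← hrange']
            ext y
            simp only [Subgroup.mem_bot, MonoidHom.mem_range]
            constructor
            · rintro ⟨q, rfl⟩
              have : q ∈ ψ'.ker := by rw [h]; trivial
              exact this
            · rintro rfl
              exact ⟨1, map_one ψ'⟩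
        have hcardQ : Nat.card (↥(S.ser i.succ) ⧸ (S.ser i.castSucc).subgroupOf (S.ser i.succ))
            = Nat.card D := by
          rw [← hrange']
          exact Nat.card_congr (MonoidHom.ofInjective hinj).toEquiv
        have hDsimple : IsSimpleGroup D := by
          have h := Ex9.isSimpleGroup_of_mulEquiv (MonoidHom.ofInjective hinj)
          rwa [hrange'] at h
        haveI : Finite (Multiplicative (ZMod (p ^ m)) ⧸ B) := Quotient.finite _
        have hDprime : (Nat.card D).Prime := by
          exact @IsSimpleGroup.prime_card _ _ hDsimple
        have hDdvd : Nat.card D ∣ p ^ m := by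
          have h1 : Nat.card D ∣ Nat.card ((Multiplicative (ZMod (p ^ m))) ⧸ B) :=
            Subgroup.card_subgroup_dvd_card D
          have h2 : Nat.card ((Multiplicative (ZMod (p ^ m))) ⧸ B) ∣
              Nat.card (Multiplicative (ZMod (p ^ m))) := Subgroup.card_quotient_dvd_card B
          have h3 : Nat.card (Multiplicative (ZMod (p ^ m))) = p ^ m := by
            rw [Nat.card_congr Multiplicative.toAdd, Nat.card_zmod]
          rw [h3] at h2
          exact h1.trans h2
        have hDp : Nat.card D = p := by
          have := hDprime.dvd_of_dvd_pow (n := m) hDdvd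
          exact (Nat.prime_dvd_prime_iff_eq hDprime hp).mp this
        have hi_not : i ∉ small := by
          simp [hsmall]
        have hi_mem : i ∈ big := by
          rw [hbig]
          simp only [Finset.mem_filter, Finset.mem_univ, true_and]
          exact ⟨Fin.castSucc_lt_succ, by rw [hcardQ, hDp]⟩
        have hcards : small.card + 1 ≤ big.card := by
          have : insert i small ⊆ big := by
            intro j hj
            rcases Finset.mem_insert.mp hj with rfl | hj
            · exact hi_mem
            · exact hsb hj
          calc small.card + 1 = (insert i small).card :=
                (Finset.card_insert_of_notMem hi_not).symm
            _ ≤ big.card := Finset.card_le_card this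
        calc Nat.card C = Nat.card D * Nat.card B := hcardC
          _ = p * Nat.card B := by rw [hDp]
          _ ∣ p * p ^ small.card := mul_dvd_mul_left p ihi
          _ = p ^ (small.card + 1) := by ring
          _ ∣ p ^ big.card := pow_dvd_pow p hcards
  -- conclude
  have hlast := key (Fin.last S.len)
  rw [S.ser_top] at hlast
  have htop : (⊤ : Subgroup G).map φ = ⊤ := Subgroup.map_top_of_surjective φ hφ
  rw [htop] at hlast
  have hcardtop : Nat.card (⊤ : Subgroup (Multiplicative (ZMod (p ^ m)))) = p ^ m := by
    rw [Subgroup.card_top, Nat.card_congr Multiplicative.toAdd, Nat.card_zmod]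
  rw [hcardtop] at hlast
  have hfilter : (Finset.univ.filter fun j : Fin S.len => j.castSucc < Fin.last S.len ∧
      Nat.card (↥(S.ser j.succ) ⧸ (S.ser j.castSucc).subgroupOf (S.ser j.succ)) = p)
      = (Finset.univ.filter fun j : Fin S.len =>
        Nat.card (↥(S.ser j.succ) ⧸ (S.ser j.castSucc).subgroupOf (S.ser j.succ)) = p) := by
    apply Finset.filter_congr
    intro j _
    simp [Fin.castSucc_lt_last]
  rw [hfilter] at hlast
  have := (Nat.pow_dvd_pow_iff_le_right hp.one_lt).mp hlast
  simpa [GroupCompSeries.count] using this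

/-- **Example (Ex9).**  Let `p` be an odd prime, `r` a prime with `r ≡ 1 (mod p)`,
`f = p ^ k` with `k ≥ 1`, and `q = r ^ f`.  Then `c_p(GL(d, q)) ≥ v_p(r − 1) + k`. -/
theorem cp_GL_ge_of_cross_characteristic (p r k d : ℕ) (hp : p.Prime) (hp2 : p ≠ 2)
    (hr : r.Prime) (hmod : r % p = 1) (hk : 1 ≤ k) (hd : 1 ≤ d)
    (F : Type) [Field F] [Fintype F] (hF : Fintype.card F = r ^ p ^ k) :
    padicValNat p (r - 1) + k ≤ cp p (Matrix.GeneralLinearGroup (Fin d) F) := by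
  classical
  haveI : Fact p.Prime := ⟨hp⟩
  have hr1 : 1 < r := hr.one_lt
  have hpd : p ∣ r - 1 := by
    have := Nat.div_add_mod r p
    exact ⟨r / p, by omega⟩
  have hpr : ¬ p ∣ r := by
    intro h
    obtain ⟨c, rfl⟩ := h
    rw [Nat.mul_mod_right] at hmod
    omega
  have hval : padicValNat p (r ^ p ^ k - 1) = padicValNat p (r - 1) + k := by
    have h := padicValNat.pow_sub_pow (p := p) (hp.odd_of_ne_two hp2) (x := r) (y := 1)
      hr1 (by simpa using hpd) hpr (n := p ^ k) (pow_ne_zero k hp.pos.ne')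
    rw [one_pow] at h
    rw [h, padicValNat.prime_pow]
  set m := padicValNat p (r ^ p ^ k - 1) with hm
  haveI : NeZero (p ^ m) := ⟨pow_ne_zero m hp.pos.ne'⟩
  -- units of F
  have hcardu : Nat.card Fˣ = r ^ p ^ k - 1 := by
    rw [Nat.card_eq_fintype_card, Fintype.card_units, hF]
  have hdvd : p ^ m ∣ Nat.card Fˣ := by
    rw [hcardu, hm]
    exact pow_padicValNat_dvd
  -- determinant is surjective
  have hdet : Function.Surjective
      (Matrix.GeneralLinearGroup.det : Matrix.GeneralLinearGroup (Fin d) F →* Fˣ) := by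
    intro u
    have i0 : Fin d := ⟨0, hd⟩
    refine ⟨⟨Matrix.diagonal (fun i => if i = i0 then (u : F) else 1),
      Matrix.diagonal (fun i => if i = i0 then ((u⁻¹ : Fˣ) : F) else 1), ?_, ?_⟩, ?_⟩
    · apply Matrix.ext
      intro i j
      rw [Matrix.diagonal_mul_diagonal]
      by_cases hij : i = j
      · subst hij
        by_cases h : i = i0 <;>
          simp [Matrix.diagonal_apply_eq, Matrix.one_apply_eq, h, Units.mul_inv]
      · rw [Matrix.diagonal_apply_ne _ hij, Matrix.one_apply_ne hij]
    · apply Matrix.ext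
      intro i j
      rw [Matrix.diagonal_mul_diagonal]
      by_cases hij : i = j
      · subst hij
        by_cases h : i = i0 <;>
          simp [Matrix.diagonal_apply_eq, Matrix.one_apply_eq, h, Units.inv_mul]
      · rw [Matrix.diagonal_apply_ne _ hij, Matrix.one_apply_ne hij]
    · apply Units.ext
      show Matrix.det (Matrix.diagonal fun i => if i = i0 then (u : F) else 1) = (u : F)
      rw [Matrix.det_diagonal, Finset.prod_ite_eq' Finset.univ i0 (fun _ => (u : F))]
      simp
  -- cyclic group hom
  have e1 := zmodCyclicMulEquiv (inferInstance : IsCyclic Fˣ)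
  have hs2 : Function.Surjective (ZMod.castHom hdvd (ZMod (p ^ m))) := by
    intro x
    obtain ⟨a, rfl⟩ := ZMod.natCast_zmod_surjective x
    exact ⟨(a : ZMod (Nat.card Fˣ)), map_natCast _ a⟩
  set ψ : Multiplicative (ZMod (Nat.card Fˣ)) →* Multiplicative (ZMod (p ^ m)) :=
    AddMonoidHom.toMultiplicative (ZMod.castHom hdvd (ZMod (p ^ m))).toAddMonoidHom with hψ
  have hψs : Function.Surjective ψ := fun x => by
    obtain ⟨a, ha⟩ := hs2 x.toAdd
    exact ⟨Multiplicative.ofAdd a, by simp [hψ, ha]⟩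
  set φ : Matrix.GeneralLinearGroup (Fin d) F →* Multiplicative (ZMod (p ^ m)) :=
    ψ.comp (e1.symm.toMonoidHom.comp Matrix.GeneralLinearGroup.det) with hφ
  have hφs : Function.Surjective φ := by
    have h := hψs.comp (e1.symm.surjective.comp hdet)
    simpa [hφ, MonoidHom.coe_comp] using h
  -- conclude
  have hne : Nonempty (GroupCompSeries (Matrix.GeneralLinearGroup (Fin d) F)) :=
    Ex9.exists_series _
  have hcount : m ≤ hne.some.count p := Ex9.count_ge hp φ hφs hne.some
  have : cp p (Matrix.GeneralLinearGroup (Fin d) F) = hne.some.count p := by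
    show (if h : Nonempty (GroupCompSeries (Matrix.GeneralLinearGroup (Fin d) F))
      then h.some.count p else 0) = hne.some.count p
    rw [dif_pos hne]
  rw [this, ← hval]
  exact hcount
end
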